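/- For every globally Lipschitz concave function f : E → ℝ and every ε > 0 there exists a finite nonempty set S ⊆ ℚ^d × ℚ such that the function g(x) := min_{(a,b) ∈ S} (⟪a, x⟫ + b) satisfies |f(x) − g(x)| ≤ ε(1 + ‖x‖) for all x ∈ E. Moreover, one can choose a sequence {g_n} of such rational concave piecewise affine functions with g_n ≤ g_{n+1} pointwise converging to f in the G-norm. That is, rational concave piecewise affine functions are dense in the cone of globally Lipschitz concave functions with respect to the G-norm. -/

import Mathlib

open Set

noncomputable section

/-- `f` is globally Lipschitz. -/
def GloballyLipschitz (d : ℕ) (f : EuclideanSpace ℝ (Fin d) → ℝ) : Prop :=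
  ∃ C : ℝ, 0 ≤ C ∧ ∀ x y, |f x - f y| ≤ C * ‖x - y‖

/-- The rational point of `ℝ^d` with coordinates `q`. -/
noncomputable def ratToE (d : ℕ) (q : Fin d → ℚ) : EuclideanSpace ℝ (Fin d) :=
  (WithLp.equiv 2 (Fin d → ℝ)).symm fun i => (q i : ℝ)

/-- `g` is a rational concave piecewise affine function:
`g(x) = min_{(a,b) ∈ S} (⟪a, x⟫ + b)` for a finite nonempty set `S ⊆ ℚ^d × ℚ`. -/
def IsRatCPA (d : ℕ) (g : EuclideanSpace ℝ (Fin d) → ℝ) : Prop :=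
  ∃ S : Finset ((Fin d → ℚ) × ℚ), ∃ hS : S.Nonempty,
    ∀ x, g x = S.inf' hS fun p => (inner ℝ (ratToE d p.1) x : ℝ) + (p.2 : ℝ)

/- ### Auxiliary lemmas -/

lemma inner_ratToE (d : ℕ) (q : Fin d → ℚ) (x : EuclideanSpace ℝ (Fin d)) :
    (inner ℝ (ratToE d q) x : ℝ) = ∑ i, (q i : ℝ) * x i := by
  simp [ratToE, PiLp.inner_apply, PiLp.toLp_apply, WithLp.equiv_symm_apply, RCLike.inner_apply, mul_comm]

lemma ratToE_add (d : ℕ) (q r : Fin d → ℚ) :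
    ratToE d (q + r) = ratToE d q + ratToE d r := by
  ext i
  simp [ratToE, PiLp.toLp_apply, WithLp.equiv_symm_apply]

lemma abs_coord_le_norm (d : ℕ) (x : EuclideanSpace ℝ (Fin d)) (i : Fin d) :
    |x i| ≤ ‖x‖ := by
  rw [EuclideanSpace.norm_eq, ← Real.sqrt_sq (abs_nonneg (x i))]
  apply Real.sqrt_le_sqrt
  rw [sq_abs]
  calc x i ^ 2 = ‖x i‖ ^ 2 := by rw [Real.norm_eq_abs, sq_abs]
    _ ≤ ∑ j, ‖x j‖ ^ 2 :=
        Finset.single_le_sum (fun j _ => sq_nonneg ‖x j‖) (Finset.mem_univ i)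

lemma exists_supergradient (d : ℕ) (f : EuclideanSpace ℝ (Fin d) → ℝ)
    (hf : ConcaveOn ℝ Set.univ f) (C : ℝ) (hC : 0 ≤ C)
    (hL : ∀ x y, |f x - f y| ≤ C * ‖x - y‖) (x : EuclideanSpace ℝ (Fin d)) :
    ∃ u : EuclideanSpace ℝ (Fin d), ‖u‖ ≤ C ∧
      ∀ z, f z ≤ f x + (inner ℝ u (z - x) : ℝ) := by
  have hcont : Continuous f := by
    apply (LipschitzWith.of_dist_le_mul (K := C.toNNReal) (f := f) ?_).continuous
    intro a b
    rw [Real.dist_eq, dist_eq_norm, Real.coe_toNNReal C hC]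
    exact hL a b
  set t : Set (EuclideanSpace ℝ (Fin d) × ℝ) := {p | -f p.1 < p.2} with ht
  have hconv : Convex ℝ t := by
    rintro ⟨p1, p2⟩ hp ⟨q1, q2⟩ hq a b ha hb hab
    simp only [ht, mem_setOf_eq] at hp hq ⊢
    have hcc := hf.2 (mem_univ p1) (mem_univ q1) ha hb hab
    simp only [smul_eq_mul] at hcc
    have h1 : a * (-f p1) ≤ a * p2 := mul_le_mul_of_nonneg_left hp.le ha
    have h2 : b * (-f q1) ≤ b * q2 := mul_le_mul_of_nonneg_left hq.le hb
    rcases eq_or_lt_of_le ha with rfl | ha'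
    · have hb1 : b = 1 := by linarith
      subst hb1
      simp only [Prod.smul_mk, Prod.mk_add_mk, smul_eq_mul, zero_smul, one_smul,
        zero_add, zero_mul, one_mul] at hcc ⊢
      linarith
    · have hstrict : a * (-f p1) < a * p2 := mul_lt_mul_of_pos_left hp ha'
      simp only [Prod.smul_mk, Prod.mk_add_mk, smul_eq_mul]
      linarith
  have hopen : IsOpen t := by
    have : t = {p : EuclideanSpace ℝ (Fin d) × ℝ | 0 < p.2 + f p.1} := by
      ext p; simp only [ht, mem_setOf_eq]; constructor <;> intro h <;> linarith
    rw [this]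
    exact isOpen_lt continuous_const (continuous_snd.add (hcont.comp continuous_fst))
  have hmem : ((x, -f x) : EuclideanSpace ℝ (Fin d) × ℝ) ∉ t := by simp [ht]
  obtain ⟨ℓ, hℓ⟩ := geometric_hahn_banach_point_open hconv hopen hmem
  set c : ℝ := ℓ (0, 1) with hc
  have hsplit : ∀ (z : EuclideanSpace ℝ (Fin d)) (s : ℝ), ℓ (z, s) = ℓ (z, 0) + s * c := by
    intro z s
    have : ((z, s) : EuclideanSpace ℝ (Fin d) × ℝ)
        = (z, 0) + s • ((0 : EuclideanSpace ℝ (Fin d)), (1:ℝ)) := by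
      simp [Prod.ext_iff]
    rw [this, map_add, map_smul]
    simp [hc, smul_eq_mul]
  have hcpos : 0 < c := by
    have h1 : ℓ (x, -f x) < ℓ (x, -f x + 1) := hℓ _ (by simp [ht])
    rw [hsplit x (-f x + 1), hsplit x (-f x)] at h1
    linarith
  have hkey : ∀ z, ℓ (x, -f x) ≤ ℓ (z, -f z) := by
    intro z
    refine le_of_forall_pos_lt_add fun ε hε => ?_
    have hmem2 : ((z, -f z + ε / c) : EuclideanSpace ℝ (Fin d) × ℝ) ∈ t := by
      simp only [ht, mem_setOf_eq]
      have : 0 < ε / c := div_pos hε hcpos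
      linarith
    have h1 : ℓ (x, -f x) < ℓ (z, -f z + ε / c) := hℓ _ hmem2
    rw [hsplit z (-f z + ε / c)] at h1
    rw [hsplit z (-f z)]
    have : (ε / c) * c = ε := div_mul_cancel₀ ε hcpos.ne'
    nlinarith
  set φ : EuclideanSpace ℝ (Fin d) →L[ℝ] ℝ :=
    ℓ.comp (ContinuousLinearMap.inl ℝ (EuclideanSpace ℝ (Fin d)) ℝ) with hφ
  have hφap : ∀ z, φ z = ℓ (z, 0) := fun z => rfl
  set u : EuclideanSpace ℝ (Fin d) :=
    (InnerProductSpace.toDual ℝ (EuclideanSpace ℝ (Fin d))).symm (c⁻¹ • φ) with hu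
  have hinner : ∀ z, (inner ℝ u z : ℝ) = c⁻¹ * φ z := by
    intro z
    rw [hu, InnerProductSpace.toDual_symm_apply]
    rfl
  have hgrad : ∀ z, f z ≤ f x + (inner ℝ u (z - x) : ℝ) := by
    intro z
    have h := hkey z
    rw [hsplit x (-f x), hsplit z (-f z)] at h
    have h2 : (inner ℝ u (z - x) : ℝ) = c⁻¹ * (ℓ (z,0) - ℓ (x,0)) := by
      rw [hinner, map_sub, hφap, hφap]
    rw [h2]
    have h3 : f z - f x ≤ (ℓ (z,0) - ℓ (x,0)) / c := by
      rw [le_div_iff₀ hcpos]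
      nlinarith
    rw [div_eq_inv_mul] at h3
    linarith
  refine ⟨u, ?_, hgrad⟩
  rcases eq_or_ne u 0 with hu0 | hune
  · rw [hu0, norm_zero]; exact hC
  · have h := hgrad (x - u)
    have h1 : (inner ℝ u ((x - u) - x) : ℝ) = -‖u‖^2 := by
      have hxu : (x - u) - x = -u := by abel
      rw [hxu, inner_neg_right, real_inner_self_eq_norm_sq]
    rw [h1] at h
    have h3 : f x - f (x - u) ≤ C * ‖u‖ := by
      have hlip := hL x (x - u)
      have hx : x - (x - u) = u := by abel
      rw [hx] at hlip
      exact (le_abs_self _).trans hlip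
    have hupos : 0 < ‖u‖ := norm_pos_iff.2 hune
    nlinarith

lemma grid_lemma (d : ℕ) (hd : 1 ≤ d) (ε' : ℚ) (hε : 0 < ε') (C : ℝ) (hC : 0 ≤ C) :
    ∃ Q : Finset (Fin d → ℚ), ∀ u : EuclideanSpace ℝ (Fin d), ‖u‖ ≤ C →
      ∃ q ∈ Q, ‖ratToE d q - u‖ ≤ (ε' : ℝ) := by
  have hdR : (1:ℝ) ≤ (d:ℝ) := by exact_mod_cast hd
  set δ : ℚ := ε' / d with hδ
  have hδpos : 0 < δ := div_pos hε (by exact_mod_cast hd)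
  have hδR : (0:ℝ) < (δ:ℝ) := by exact_mod_cast hδpos
  set B : ℤ := ⌈C / (δ:ℝ)⌉ + 1 with hB
  refine ⟨(Fintype.piFinset fun _ : Fin d => Finset.Icc (-B) B).image
    (fun z i => (z i : ℚ) * δ), ?_⟩
  intro u hu
  set z : Fin d → ℤ := fun i => ⌊u i / (δ:ℝ)⌋ with hz
  have hcoordb : ∀ i, |u i| ≤ C := fun i => (abs_coord_le_norm d u i).trans hu
  have hzmem : ∀ i, z i ∈ Finset.Icc (-B) B := by
    intro i
    rw [Finset.mem_Icc]
    have hceil : C / (δ:ℝ) ≤ (⌈C / (δ:ℝ)⌉ : ℝ) := Int.le_ceil _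
    constructor
    · have h1 : u i / (δ:ℝ) - 1 < (z i : ℝ) := Int.sub_one_lt_floor _
      have h2 : (-C) / (δ:ℝ) ≤ u i / (δ:ℝ) := by
        gcongr
        exact (abs_le.mp (hcoordb i)).1
      have h3 : ((-B : ℤ) : ℝ) ≤ (z i : ℝ) := by
        rw [hB]
        push_cast
        rw [neg_div] at h2
        linarith
      exact_mod_cast h3
    · have h1 : (z i : ℝ) ≤ u i / (δ:ℝ) := Int.floor_le _
      have h2 : u i / (δ:ℝ) ≤ C / (δ:ℝ) := by
        gcongr
        exact (abs_le.mp (hcoordb i)).2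
      have h3 : (z i : ℝ) ≤ ((B : ℤ) : ℝ) := by
        rw [hB]
        push_cast
        linarith
      exact_mod_cast h3
  refine ⟨fun i => (z i : ℚ) * δ, Finset.mem_image_of_mem _ (by
    rw [Fintype.mem_piFinset]; exact hzmem), ?_⟩
  have hcd : ∀ i, |(((z i : ℚ) * δ : ℚ) : ℝ) - u i| ≤ (δ:ℝ) := by
    intro i
    have h1 : (z i : ℝ) ≤ u i / (δ:ℝ) := Int.floor_le _
    have h2 : u i / (δ:ℝ) - 1 < (z i : ℝ) := Int.sub_one_lt_floor _
    have h3 : (z i : ℝ) * (δ:ℝ) ≤ u i := by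
      rw [← le_div_iff₀ hδR]; exact h1
    have h4 : u i - (δ:ℝ) ≤ (z i : ℝ) * (δ:ℝ) := by
      have := mul_le_mul_of_nonneg_right h2.le hδR.le
      rw [sub_mul, one_mul, div_mul_cancel₀ _ hδR.ne'] at this
      linarith
    rw [abs_le]
    push_cast
    constructor <;> linarith
  rw [EuclideanSpace.norm_eq, ← Real.sqrt_sq (by positivity : (0:ℝ) ≤ (ε':ℝ))]
  apply Real.sqrt_le_sqrt
  have hterm : ∀ i : Fin d, ‖(ratToE d (fun i => (z i : ℚ) * δ) - u) i‖ ^ 2 ≤ (δ:ℝ)^2 := by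
    intro i
    have : (ratToE d (fun i => (z i : ℚ) * δ) - u) i = (((z i : ℚ) * δ : ℚ) : ℝ) - u i := by
      simp [ratToE, PiLp.toLp_apply, WithLp.equiv_symm_apply]
    rw [this, Real.norm_eq_abs]
    have h6 := hcd i
    nlinarith [abs_nonneg ((((z i : ℚ) * δ : ℚ) : ℝ) - u i),
      sq_abs ((((z i : ℚ) * δ : ℚ) : ℝ) - u i)]
  calc ∑ i, ‖(ratToE d (fun i => (z i : ℚ) * δ) - u) i‖ ^ 2
      ≤ ∑ _i : Fin d, (δ:ℝ)^2 := Finset.sum_le_sum fun i _ => hterm i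
    _ = d * (δ:ℝ)^2 := by rw [Finset.sum_const, Finset.card_univ, Fintype.card_fin, nsmul_eq_mul]
    _ ≤ (ε':ℝ)^2 := by
        have hδval : (δ:ℝ) = (ε':ℝ) / d := by rw [hδ]; push_cast; ring
        rw [hδval, div_pow]
        have h5 : (d:ℝ) * ((ε':ℝ)^2/(d:ℝ)^2) = (ε':ℝ)^2/(d:ℝ) := by
          field_simp
        rw [h5]
        exact div_le_self (sq_nonneg _) hdR

lemma main1 (d : ℕ) (hd : 1 ≤ d) (f : EuclideanSpace ℝ (Fin d) → ℝ)
    (hf : ConcaveOn ℝ Set.univ f) (C : ℝ) (hC : 0 ≤ C)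
    (hL : ∀ x y, |f x - f y| ≤ C * ‖x - y‖) (ε : ℝ) (hε : 0 < ε) :
    ∃ g : EuclideanSpace ℝ (Fin d) → ℝ,
      IsRatCPA d g ∧ ∀ x, |f x - g x| ≤ ε * (1 + ‖x‖) := by
  classical
  obtain ⟨ε', hε'0, hε'⟩ := exists_rat_btwn hε
  have hε'Q : 0 < ε' := by exact_mod_cast hε'0
  have hε'R : (0:ℝ) < (ε':ℝ) := hε'0
  obtain ⟨Q, hQ⟩ := grid_lemma d hd ε' hε'Q C hC
  set Φ : (Fin d → ℚ) → Set ℝ :=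
    fun q => Set.range (fun z : EuclideanSpace ℝ (Fin d) =>
      (inner ℝ (ratToE d q) z : ℝ) + (ε':ℝ) * ‖z‖ - f z) with hΦ
  have hbdd : ∀ (x u : EuclideanSpace ℝ (Fin d)),
      (∀ z, f z ≤ f x + (inner ℝ u (z - x) : ℝ)) →
      ∀ q : Fin d → ℚ, ‖ratToE d q - u‖ ≤ (ε':ℝ) →
      ∀ r ∈ Φ q, (inner ℝ u x : ℝ) - f x ≤ r := by
    intro x u hsg q hq r hr
    obtain ⟨z, rfl⟩ := hr
    dsimp only
    have h1 : (inner ℝ (ratToE d q) z : ℝ) - (inner ℝ u z : ℝ)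
        = (inner ℝ (ratToE d q - u) z : ℝ) := by
      rw [inner_sub_left]
    have h2 : |(inner ℝ (ratToE d q - u) z : ℝ)| ≤ ‖ratToE d q - u‖ * ‖z‖ :=
      abs_real_inner_le_norm _ _
    have h3 : -((ε':ℝ) * ‖z‖) ≤ (inner ℝ (ratToE d q - u) z : ℝ) := by
      have h4 : ‖ratToE d q - u‖ * ‖z‖ ≤ (ε':ℝ) * ‖z‖ :=
        mul_le_mul_of_nonneg_right hq (norm_nonneg z)
      have := (abs_le.mp h2).1
      linarith
    have h5 := hsg z
    rw [inner_sub_right] at h5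
    linarith
  set A' : Finset (Fin d → ℚ) := Q.filter (fun q => BddBelow (Φ q)) with hA'
  set G : (Fin d → ℚ) → ℝ := fun q => sInf (Φ q) with hG
  have hβex : ∀ q ∈ A', ∃ b : ℚ, G q - (ε':ℝ) < (b:ℝ) ∧ (b:ℝ) < G q :=
    fun q _ => exists_rat_btwn (sub_lt_self _ hε'R)
  choose! β hβ1 hβ2 using hβex
  obtain ⟨u0, hu0C, hsg0⟩ := exists_supergradient d f hf C hC hL 0
  obtain ⟨q0, hq0Q, hq0⟩ := hQ u0 hu0C
  have hq0A : q0 ∈ A' := by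
    rw [hA', Finset.mem_filter]
    exact ⟨hq0Q, ⟨(inner ℝ u0 (0:EuclideanSpace ℝ (Fin d)) : ℝ) - f 0,
      fun r hr => hbdd 0 u0 hsg0 q0 hq0 r hr⟩⟩
  set S : Finset ((Fin d → ℚ) × ℚ) := A'.image (fun q => (q, -β q)) with hSdef
  have hS : S.Nonempty := ⟨(q0, -β q0), Finset.mem_image_of_mem _ hq0A⟩
  set g : EuclideanSpace ℝ (Fin d) → ℝ :=
    fun x => S.inf' hS (fun p => (inner ℝ (ratToE d p.1) x : ℝ) + (p.2 : ℝ)) with hgdef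
  refine ⟨g, ⟨S, hS, fun x => rfl⟩, ?_⟩
  intro x
  have hlow : f x - (ε':ℝ) * ‖x‖ ≤ g x := by
    rw [hgdef]
    apply Finset.le_inf'
    rintro p hp
    obtain ⟨q, hqA, rfl⟩ := Finset.mem_image.mp hp
    have hbddq : BddBelow (Φ q) := (Finset.mem_filter.mp hqA).2
    have h1 : G q ≤ (inner ℝ (ratToE d q) x : ℝ) + (ε':ℝ) * ‖x‖ - f x :=
      csInf_le hbddq ⟨x, rfl⟩
    have h2 : (β q : ℝ) < G q := hβ2 q hqA
    push_cast
    linarith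
  have hup : g x ≤ f x + (ε':ℝ) + (ε':ℝ) * ‖x‖ := by
    obtain ⟨u, huC, hsg⟩ := exists_supergradient d f hf C hC hL x
    obtain ⟨q, hqQ, hqnear⟩ := hQ u huC
    have hbddq : BddBelow (Φ q) := ⟨(inner ℝ u x : ℝ) - f x,
      fun r hr => hbdd x u hsg q hqnear r hr⟩
    have hqA : q ∈ A' := by rw [hA', Finset.mem_filter]; exact ⟨hqQ, hbddq⟩
    have hGlb : (inner ℝ u x : ℝ) - f x ≤ G q :=
      le_csInf (Set.range_nonempty _) (fun r hr => hbdd x u hsg q hqnear r hr)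
    have h1 : g x ≤ (inner ℝ (ratToE d q) x : ℝ) + ((-β q : ℚ) : ℝ) :=
      Finset.inf'_le _ (Finset.mem_image_of_mem _ hqA)
    have h2 : G q - (ε':ℝ) < (β q : ℝ) := hβ1 q hqA
    have h3 : (inner ℝ (ratToE d q) x : ℝ) - (inner ℝ u x : ℝ) ≤ (ε':ℝ) * ‖x‖ := by
      rw [← inner_sub_left]
      have := (abs_le.mp (abs_real_inner_le_norm (ratToE d q - u) x)).2
      have h4 : ‖ratToE d q - u‖ * ‖x‖ ≤ (ε':ℝ) * ‖x‖ :=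
        mul_le_mul_of_nonneg_right hqnear (norm_nonneg x)
      linarith
    push_cast at h1
    linarith
  have hxnn : (0:ℝ) ≤ ‖x‖ := norm_nonneg x
  rw [abs_le]
  constructor
  · nlinarith
  · nlinarith

lemma isRatCPA_add (d : ℕ) (g₁ g₂ : EuclideanSpace ℝ (Fin d) → ℝ)
    (h₁ : IsRatCPA d g₁) (h₂ : IsRatCPA d g₂) :
    IsRatCPA d (fun x => g₁ x + g₂ x) := by
  classical
  obtain ⟨S₁, hS₁, hg₁⟩ := h₁
  obtain ⟨S₂, hS₂, hg₂⟩ := h₂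
  refine ⟨(S₁ ×ˢ S₂).image (fun pq => (pq.1.1 + pq.2.1, pq.1.2 + pq.2.2)),
    (hS₁.product hS₂).image _, fun x => ?_⟩
  show g₁ x + g₂ x = _
  rw [Finset.inf'_image]
  rw [hg₁ x, hg₂ x]
  apply le_antisymm
  · apply Finset.le_inf'
    intro pq hpq
    obtain ⟨hpq1, hpq2⟩ := Finset.mem_product.mp hpq
    have e1 := Finset.inf'_le (fun p => (inner ℝ (ratToE d p.1) x : ℝ) + (p.2 : ℝ)) hpq1
    have e2 := Finset.inf'_le (fun p => (inner ℝ (ratToE d p.1) x : ℝ) + (p.2 : ℝ)) hpq2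
    simp only [Function.comp_apply]
    rw [ratToE_add, inner_add_left]
    push_cast
    have := add_le_add e1 e2
    linarith
  · obtain ⟨a, ha, hA⟩ := Finset.exists_mem_eq_inf' hS₁
      (fun p => (inner ℝ (ratToE d p.1) x : ℝ) + (p.2 : ℝ))
    obtain ⟨b, hb, hB⟩ := Finset.exists_mem_eq_inf' hS₂
      (fun p => (inner ℝ (ratToE d p.1) x : ℝ) + (p.2 : ℝ))
    rw [hA, hB]
    have hmem : (a, b) ∈ S₁ ×ˢ S₂ := Finset.mem_product.mpr ⟨ha, hb⟩
    have step := Finset.inf'_le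
      ((fun p : (Fin d → ℚ) × ℚ => (inner ℝ (ratToE d p.1) x : ℝ) + (p.2 : ℝ)) ∘
        (fun pq : ((Fin d → ℚ) × ℚ) × ((Fin d → ℚ) × ℚ) =>
          ((pq.1.1 + pq.2.1, pq.1.2 + pq.2.2) : (Fin d → ℚ) × ℚ))) hmem
    refine le_trans (le_of_eq ?_) (step.trans (le_of_eq ?_))
    · congr 1
    · simp only [Function.comp_apply]
      rw [ratToE_add, inner_add_left]
      push_cast
      ring

lemma isRatCPA_mu (d : ℕ) (hd : 1 ≤ d) (H : (Finset.univ : Finset (Fin d)).Nonempty)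
    (δ : ℚ) (hδ : 0 < δ) :
    IsRatCPA d (fun x => -(δ:ℝ) * ((Finset.univ.sup' H fun i => |x i|) + 1)) := by
  classical
  have hδR : (0:ℝ) < (δ:ℝ) := by exact_mod_cast hδ
  set V : Finset ((Fin d → ℚ) × ℚ) :=
    (Finset.univ : Finset (Fin d × Bool)).image
      (fun p => (fun j => if j = p.1 then (if p.2 then δ else -δ) else 0, -δ)) with hV
  have hVne : V.Nonempty := by
    refine ⟨_, Finset.mem_image_of_mem _ (Finset.mem_univ (⟨0, hd⟩, true))⟩
  refine ⟨V, hVne, fun x => ?_⟩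
  dsimp only
  have hpiece : ∀ (i : Fin d) (s : Bool),
      (inner ℝ (ratToE d (fun j => if j = i then (if s then δ else -δ) else 0)) x : ℝ) +
        ((-δ : ℚ) : ℝ) = (if s then (δ:ℝ) else -(δ:ℝ)) * x i - (δ:ℝ) := by
    intro i s
    rw [inner_ratToE]
    have : ∀ j, ((if j = i then (if s then δ else -δ) else 0 : ℚ) : ℝ) * x j
        = if j = i then (if s then (δ:ℝ) else -(δ:ℝ)) * x j else 0 := by
      intro j
      by_cases h : j = i <;> by_cases hs : s <;> simp [h, hs]
    rw [Finset.sum_congr rfl (fun j _ => this j), Finset.sum_ite_eq' Finset.univ i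
      (fun j => (if s then (δ:ℝ) else -(δ:ℝ)) * x j)]
    cases s <;> simp <;> ring
  set M : ℝ := Finset.univ.sup' H fun i => |x i| with hM
  apply le_antisymm
  · apply Finset.le_inf'
    intro p hp
    obtain ⟨⟨i, s⟩, _, rfl⟩ := Finset.mem_image.mp hp
    rw [hpiece i s]
    have h1 : |x i| ≤ M := by
      rw [hM]; exact Finset.le_sup' (fun i => |x i|) (Finset.mem_univ i)
    have h2 : (if s then (δ:ℝ) else -(δ:ℝ)) * x i ≥ -((δ:ℝ) * |x i|) := by
      by_cases hs : s <;> simp [hs] <;> cases abs_cases (x i) <;> nlinarith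
    nlinarith
  · obtain ⟨i, _, hi⟩ := Finset.exists_mem_eq_sup' H (fun i => |x i|)
    set s : Bool := decide (x i ≤ 0) with hs
    have hmem : ((fun j => if j = i then (if s then δ else -δ) else 0, -δ)
        : (Fin d → ℚ) × ℚ) ∈ V :=
      Finset.mem_image_of_mem _ (Finset.mem_univ (i, s))
    calc V.inf' hVne (fun p => (inner ℝ (ratToE d p.1) x : ℝ) + (p.2 : ℝ))
        ≤ _ := Finset.inf'_le _ hmem
      _ = (if s then (δ:ℝ) else -(δ:ℝ)) * x i - (δ:ℝ) := hpiece i s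
      _ = -(δ:ℝ) * (M + 1) := by
          rw [hM, hi]
          by_cases hxi : x i ≤ 0
          · rw [if_pos (by simp [hs, hxi]), abs_of_nonpos hxi]; ring
          · rw [if_neg (by simp [hs, hxi]), abs_of_pos (not_le.mp hxi)]; ring

/-- Rational concave piecewise affine functions are dense in the cone of globally Lipschitz
concave functions with respect to the G-norm, and the approximating sequence can be chosen
increasing. -/
theorem stmt_17 (d : ℕ) (hd : 1 ≤ d)
    (f : EuclideanSpace ℝ (Fin d) → ℝ)
    (hf : ConcaveOn ℝ Set.univ f) (hfL : GloballyLipschitz d f) :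
    (∀ ε : ℝ, 0 < ε → ∃ g : EuclideanSpace ℝ (Fin d) → ℝ,
      IsRatCPA d g ∧ ∀ x, |f x - g x| ≤ ε * (1 + ‖x‖)) ∧
    (∃ g : ℕ → EuclideanSpace ℝ (Fin d) → ℝ,
      (∀ n, IsRatCPA d (g n)) ∧
      (∀ n x, g n x ≤ g (n + 1) x) ∧
      (∀ ε : ℝ, 0 < ε → ∃ N : ℕ, ∀ n ≥ N, ∀ x, |g n x - f x| ≤ ε * (1 + ‖x‖))) := by
  classical
  obtain ⟨C, hC, hL⟩ := hfL
  constructor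
  · exact fun ε hε => main1 d hd f hf C hC hL ε hε
  · haveI : Nonempty (Fin d) := ⟨⟨0, hd⟩⟩
    have H : (Finset.univ : Finset (Fin d)).Nonempty := Finset.univ_nonempty
    have hdR : (1:ℝ) ≤ (d:ℝ) := by exact_mod_cast hd
    have hη : ∀ n : ℕ, (0:ℝ) < (1/2:ℝ)^n := fun n => by positivity
    have hch : ∀ n : ℕ, ∃ h, IsRatCPA d h ∧ ∀ x, |f x - h x| ≤ (1/2:ℝ)^n * (1+‖x‖) :=
      fun n => main1 d hd f hf C hC hL _ (hη n)
    choose Hf hHcpa hHerr using hch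
    have hdQ : (0:ℚ) < (d:ℚ) := by exact_mod_cast hd
    set δq : ℕ → ℚ := fun n => 4*d*(1/2)^n with hδq
    have hδqpos : ∀ n, 0 < δq n := fun n => by
      show (0:ℚ) < 4*(d:ℚ)*(1/2)^n
      exact mul_pos (mul_pos (by norm_num) hdQ) (pow_pos (by norm_num) n)
    have hδcast : ∀ n, ((δq n : ℚ) : ℝ) = 4*(d:ℝ)*(1/2:ℝ)^n := by
      intro n
      rw [hδq]
      push_cast
      ring
    set M : EuclideanSpace ℝ (Fin d) → ℝ :=
      fun x => Finset.univ.sup' H fun i => |x i| with hM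
    have hM0 : ∀ x, 0 ≤ M x := fun x =>
      le_trans (abs_nonneg (x ⟨0, hd⟩))
        (Finset.le_sup' (fun i => |x i|) (Finset.mem_univ ⟨0, hd⟩))
    have hMle : ∀ x, M x ≤ ‖x‖ := fun x =>
      Finset.sup'_le _ _ fun i _ => abs_coord_le_norm d x i
    have hMnorm : ∀ x, ‖x‖ ≤ (d:ℝ) * M x := by
      intro x
      have h1 : ∀ i : Fin d, ‖x i‖^2 ≤ (M x)^2 := by
        intro i
        have := Finset.le_sup' (fun i => |x i|) (Finset.mem_univ i)
        rw [Real.norm_eq_abs]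
        nlinarith [abs_nonneg (x i), hM0 x]
      have h2 : ∑ i, ‖x i‖^2 ≤ (d:ℝ) * (M x)^2 := by
        calc ∑ i, ‖x i‖^2 ≤ ∑ _i : Fin d, (M x)^2 := Finset.sum_le_sum fun i _ => h1 i
          _ = (d:ℝ) * (M x)^2 := by
              rw [Finset.sum_const, Finset.card_univ, Fintype.card_fin, nsmul_eq_mul]
      rw [EuclideanSpace.norm_eq]
      rw [← Real.sqrt_sq (mul_nonneg (Nat.cast_nonneg d) (hM0 x))]
      apply Real.sqrt_le_sqrt
      have : (d:ℝ) * (M x)^2 ≤ ((d:ℝ) * M x)^2 := by nlinarith [hM0 x]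
      linarith
    set g : ℕ → EuclideanSpace ℝ (Fin d) → ℝ :=
      fun n => fun x => Hf n x + (-(δq n : ℝ) * (M x + 1)) with hg
    refine ⟨g, ?_, ?_, ?_⟩
    · intro n
      exact isRatCPA_add d (Hf n) (fun x => -(δq n : ℝ) * (M x + 1)) (hHcpa n)
        (isRatCPA_mu d hd H (δq n) (hδqpos n))
    · intro n x
      show Hf n x + (-(δq n : ℝ) * (M x + 1)) ≤ Hf (n+1) x + (-(δq (n+1) : ℝ) * (M x + 1))
      have e1 := abs_le.mp (hHerr n x)
      have e2 := abs_le.mp (hHerr (n+1) x)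
      rw [pow_succ] at e2
      rw [hδcast n, hδcast (n+1), pow_succ]
      have hxnn : (0:ℝ) ≤ ‖x‖ := norm_nonneg x
      have hkey : (1/2:ℝ)^n * ‖x‖ ≤ (1/2:ℝ)^n * ((d:ℝ) * M x) :=
        mul_le_mul_of_nonneg_left (hMnorm x) (hη n).le
      have hkey2 : (1/2:ℝ)^n * 1 ≤ (1/2:ℝ)^n * (d:ℝ) :=
        mul_le_mul_of_nonneg_left hdR (hη n).le
      linarith [e1.1, e1.2, e2.1, e2.2, hkey, hkey2]
    · intro ε hε
      have h4d : (0:ℝ) < 4*(d:ℝ)+1 := by linarith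
      obtain ⟨N, hN⟩ := exists_pow_lt_of_lt_one (div_pos hε h4d) (by norm_num : (1/2:ℝ) < 1)
      refine ⟨N, fun n hn x => ?_⟩
      have hpow : (1/2:ℝ)^n ≤ (1/2:ℝ)^N :=
        pow_le_pow_of_le_one (by norm_num) (by norm_num) hn
      have e1 := abs_le.mp (hHerr n x)
      have hxnn : (0:ℝ) ≤ ‖x‖ := norm_nonneg x
      have hδb : 0 ≤ (δq n : ℝ) * (M x + 1) := by
        have := hδqpos n
        have h1 : (0:ℝ) < (δq n : ℝ) := by exact_mod_cast this
        nlinarith [hM0 x]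
      have hδb2 : (δq n : ℝ) * (M x + 1) ≤ 4*(d:ℝ)*(1/2:ℝ)^n * (‖x‖ + 1) := by
        rw [hδcast n]
        have h1 : M x + 1 ≤ ‖x‖ + 1 := by linarith [hMle x]
        have h2 : (0:ℝ) ≤ 4*(d:ℝ)*(1/2:ℝ)^n := by positivity
        exact mul_le_mul_of_nonneg_left h1 h2
      have hNe : (4*(d:ℝ)+1) * (1/2:ℝ)^N < ε := by
        rw [← lt_div_iff₀' h4d]
        exact hN
      show |Hf n x + (-(δq n : ℝ) * (M x + 1)) - f x| ≤ ε * (1 + ‖x‖)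
      rw [abs_le]
      have hb1 : (4*(d:ℝ)+1) * (1/2:ℝ)^n * (1+‖x‖) ≤ ε * (1+‖x‖) := by
        have h1 : (4*(d:ℝ)+1) * (1/2:ℝ)^n ≤ (4*(d:ℝ)+1) * (1/2:ℝ)^N :=
          mul_le_mul_of_nonneg_left hpow h4d.le
        have h2 : (0:ℝ) ≤ 1+‖x‖ := by linarith
        nlinarith
      constructor
      · nlinarith [hη n]
      · nlinarith [hη n]
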